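/- Let e₀ : ℝ → ℝ be continuous with e₀(t) = 0 for t < 0, and fix x > 0 and κ = π/l_y > 0. Define e(t,x) = e₀(t−x) − κ x ∫_x^t e₀(t−τ) · J₁(κ√(τ²−x²)) / √(τ²−x²) dτ for t ≥ x and e(t,x) = 0 for t < x, where J₁ is the Bessel function of the first kind of order one. If e₀ is C², then e satisfies ∂_t² e = ∂_x² e − κ² e for t > x together with e(t,0) = e₀(t). -/

import Mathlib

open Real intervalIntegral

/-- The Bessel function of the first kind of order one, via its power series
`J₁(z) = Σ_{m≥0} (−1)^m / (m! (m+1)!) (z/2)^{2m+1}`. -/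
noncomputable def besselJ1 (z : ℝ) : ℝ :=
  ∑' m : ℕ, (-1) ^ m / ((m.factorial : ℝ) * ((m + 1).factorial : ℝ))
      * (z / 2) ^ (2 * m + 1)

/-- The semi-analytic waveguide reference solution
`e(t,x) = e₀(t−x) − κ x ∫_x^t e₀(t−τ) J₁(κ√(τ²−x²))/√(τ²−x²) dτ` for `t ≥ x`
and `e(t,x) = 0` for `t < x`. -/
noncomputable def refSol (e₀ : ℝ → ℝ) (κ : ℝ) (t x : ℝ) : ℝ :=
  if x ≤ t then
    e₀ (t - x) - κ * x *
      ∫ τ in x..t, e₀ (t - τ) * besselJ1 (κ * Real.sqrt (τ ^ 2 - x ^ 2))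
        / Real.sqrt (τ ^ 2 - x ^ 2)
  else 0


set_option linter.unusedVariables false
set_option linter.unreachableTactic false
set_option linter.unusedTactic false
set_option linter.unnecessarySeqFocus false
set_option linter.deprecated false

open MeasureTheory Set

noncomputable section


/-- generic power series sum -/
def psum (b : ℕ → ℝ) (v : ℝ) : ℝ := ∑' m : ℕ, b m * v ^ m

def psShift (b : ℕ → ℝ) : ℕ → ℝ := fun m => ((m : ℝ) + 1) * b (m + 1)

def Adm (b : ℕ → ℝ) : Prop :=
  ∃ A B : ℝ, 0 ≤ A ∧ 1 ≤ B ∧ ∀ m : ℕ, |b m| ≤ A * B ^ m / (m.factorial : ℝ)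

lemma adm_summable {b : ℕ → ℝ} (hb : Adm b) (v : ℝ) :
    Summable (fun m : ℕ => b m * v ^ m) := by
  obtain ⟨A, B, hA, hB, hbd⟩ := hb
  have hu : Summable (fun m : ℕ => A * (B * |v|) ^ m / (m.factorial : ℝ)) := by
    simpa [mul_div_assoc] using (Real.summable_pow_div_factorial (B * |v|)).mul_left A
  apply Summable.of_norm_bounded hu
  intro m
  have h1 : (0:ℝ) < m.factorial := by positivity
  rw [norm_mul, norm_pow, Real.norm_eq_abs, Real.norm_eq_abs]
  calc |b m| * |v| ^ m ≤ (A * B ^ m / m.factorial) * |v| ^ m :=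
        mul_le_mul_of_nonneg_right (hbd m) (by positivity)
    _ = A * (B * |v|) ^ m / m.factorial := by rw [mul_pow]; ring

lemma adm_shift {b : ℕ → ℝ} (hb : Adm b) : Adm (psShift b) := by
  obtain ⟨A, B, hA, hB, hbd⟩ := hb
  refine ⟨A * B, B, by positivity, hB, fun m => ?_⟩
  have h1 : (0:ℝ) < m.factorial := by positivity
  have h2 : ((m+1).factorial : ℝ) = ((m:ℝ)+1) * m.factorial := by
    rw [Nat.factorial_succ]; push_cast; ring
  have h3 := hbd (m+1)
  rw [psShift, abs_mul, abs_of_nonneg (by positivity : (0:ℝ) ≤ (m:ℝ)+1)]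
  calc ((m:ℝ)+1) * |b (m+1)| ≤ ((m:ℝ)+1) * (A * B ^ (m+1) / ((m+1).factorial : ℝ)) :=
        mul_le_mul_of_nonneg_left h3 (by positivity)
    _ = A * B * B ^ m / m.factorial := by
        rw [h2, pow_succ]; field_simp

lemma nat_le_two_pow (m : ℕ) : (m : ℝ) ≤ 2 ^ m := by
  exact_mod_cast (Nat.lt_two_pow_self (n := m)).le

lemma adm_deriv_bound {b : ℕ → ℝ} {A B : ℝ} (hA : 0 ≤ A) (hB : 1 ≤ B)
    (hbd : ∀ m : ℕ, |b m| ≤ A * B ^ m / (m.factorial : ℝ)) {R : ℝ} (hR1 : 1 ≤ R)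
    {y : ℝ} (hyR : |y| ≤ R) (n : ℕ) :
    ‖b n * ((n:ℝ) * y ^ (n-1))‖ ≤ A * (2*B*R) ^ n / (n.factorial : ℝ) := by
  have hfac : (0:ℝ) < n.factorial := by positivity
  have hR0 : (0:ℝ) ≤ R := by linarith
  have hyn : |y| ^ (n-1) ≤ R ^ n := by
    calc |y| ^ (n-1) ≤ R ^ (n-1) := pow_le_pow_left₀ (abs_nonneg _) hyR _
      _ ≤ R ^ n := pow_le_pow_right₀ hR1 (Nat.sub_le n 1)
  have h2 : (n:ℝ) ≤ 2 ^ n := nat_le_two_pow n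
  have hkey : B ^ n * ((n:ℝ) * R ^ n) ≤ (2*B*R) ^ n := by
    have : B ^ n * ((n:ℝ) * R ^ n) = (n:ℝ) * (B ^ n * R ^ n) := by ring
    rw [this]
    calc (n:ℝ) * (B ^ n * R ^ n) ≤ 2 ^ n * (B ^ n * R ^ n) :=
          mul_le_mul_of_nonneg_right h2 (by positivity)
      _ = (2*B*R) ^ n := by rw [mul_pow, mul_pow]; ring
  have hstep : ‖b n * ((n:ℝ) * y ^ (n-1))‖ ≤ (A * B ^ n / n.factorial) * ((n:ℝ) * R ^ n) := by
    rw [norm_mul, Real.norm_eq_abs, Real.norm_eq_abs, abs_mul, abs_pow,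
      abs_of_nonneg (by positivity : (0:ℝ) ≤ (n:ℝ))]
    exact mul_le_mul (hbd n)
      (mul_le_mul_of_nonneg_left hyn (Nat.cast_nonneg n)) (by positivity) (by positivity)
  calc ‖b n * ((n:ℝ) * y ^ (n-1))‖ ≤ (A * B ^ n / n.factorial) * ((n:ℝ) * R ^ n) := hstep
    _ = A * (B ^ n * ((n:ℝ) * R ^ n)) / n.factorial := by ring
    _ ≤ A * (2*B*R) ^ n / n.factorial := by gcongr

lemma adm_hasDerivAt {b : ℕ → ℝ} (hb : Adm b) (v : ℝ) :
    HasDerivAt (psum b) (psum (psShift b) v) v := by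
  obtain ⟨A, B, hA, hB, hbd⟩ := hb
  set R : ℝ := |v| + 1 with hR
  have hR1 : (1:ℝ) ≤ R := by have := abs_nonneg v; rw [hR]; linarith
  have hvR : v ∈ Metric.ball (0:ℝ) R := by
    simp only [Metric.mem_ball, Real.dist_eq, sub_zero, hR]
    linarith [abs_nonneg v]
  have hu : Summable (fun m : ℕ => A * (2*B*R) ^ m / (m.factorial : ℝ)) := by
    simpa [mul_div_assoc] using (Real.summable_pow_div_factorial (2*B*R)).mul_left A
  have key : HasDerivAt (fun z => ∑' m : ℕ, b m * z ^ m)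
      (∑' m : ℕ, b m * ((m : ℝ) * v ^ (m - 1))) v := by
    refine hasDerivAt_tsum_of_isPreconnected hu Metric.isOpen_ball
      (convex_ball (0:ℝ) R).isPreconnected
      (fun n y _ => (hasDerivAt_pow n y).const_mul (b n)) (fun n y hy => ?_) hvR
      (adm_summable ⟨A, B, hA, hB, hbd⟩ v) hvR
    have hyR : |y| ≤ R := by
      have := Metric.mem_ball.mp hy
      rw [Real.dist_eq, sub_zero] at this
      linarith
    exact adm_deriv_bound hA hB hbd hR1 hyR n
  have hsum' : Summable (fun m : ℕ => b m * ((m:ℝ) * v ^ (m - 1))) := by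
    apply Summable.of_norm_bounded hu
    intro n
    exact adm_deriv_bound hA hB hbd hR1 (by rw [hR]; linarith) n
  have heq : ∑' m : ℕ, b m * ((m : ℝ) * v ^ (m - 1)) = psum (psShift b) v := by
    rw [hsum'.tsum_eq_zero_add, psum]
    simp only [Nat.cast_zero, zero_mul, mul_zero, zero_add, psShift]
    exact tsum_congr fun n => by push_cast; ring
  have h2 : HasDerivAt (psum b) (∑' m : ℕ, b m * ((m : ℝ) * v ^ (m - 1))) v := key
  rwa [heq] at h2





/-- coefficients of `G(u) = Σ (-1)^m/(m!(m+1)!) u^m`, so that `J₁(z) = (z/2)·G(z²/4)`. -/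
def cJ : ℕ → ℝ := fun m => (-1) ^ m / ((m.factorial : ℝ) * ((m + 1).factorial : ℝ))

lemma adm_cJ : Adm cJ := by
  refine ⟨1, 1, zero_le_one, le_refl 1, fun m => ?_⟩
  have h1 : (0:ℝ) < m.factorial := by positivity
  have h2 : (0:ℝ) < (m+1).factorial := by positivity
  have h3 : (1:ℝ) ≤ (m+1).factorial := by exact_mod_cast Nat.one_le_iff_ne_zero.mpr (Nat.factorial_ne_zero _)
  rw [cJ, abs_div, abs_pow, abs_neg, abs_one, one_pow,
    abs_of_nonneg (by positivity : (0:ℝ) ≤ (m.factorial : ℝ) * ((m+1).factorial : ℝ))]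
  calc 1 / ((m.factorial : ℝ) * ((m+1).factorial : ℝ)) ≤ 1 / (m.factorial : ℝ) := by
        apply one_div_le_one_div_of_le h1
        exact le_mul_of_one_le_right h1.le h3
    _ = 1 * 1 / (m.factorial : ℝ) := by norm_num

def GG : ℝ → ℝ := psum cJ
def GG1 : ℝ → ℝ := psum (psShift cJ)
def GG2 : ℝ → ℝ := psum (psShift (psShift cJ))

lemma hasDerivAt_GG (v : ℝ) : HasDerivAt GG (GG1 v) v := adm_hasDerivAt adm_cJ v
lemma hasDerivAt_GG1 (v : ℝ) : HasDerivAt GG1 (GG2 v) v := adm_hasDerivAt (adm_shift adm_cJ) v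
lemma hasDerivAt_GG2 (v : ℝ) :
    HasDerivAt GG2 (psum (psShift (psShift (psShift cJ))) v) v :=
  adm_hasDerivAt (adm_shift (adm_shift adm_cJ)) v

lemma continuous_GG : Continuous GG :=
  Differentiable.continuous fun v => (hasDerivAt_GG v).differentiableAt

lemma continuous_GG1 : Continuous GG1 :=
  Differentiable.continuous fun v => (hasDerivAt_GG1 v).differentiableAt
lemma continuous_GG2 : Continuous GG2 :=
  Differentiable.continuous fun v => (hasDerivAt_GG2 v).differentiableAt

lemma psum_zero (b : ℕ → ℝ) : psum b 0 = b 0 := by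
  rw [psum, tsum_eq_single 0 (fun m hm => by simp [zero_pow hm])]
  simp

lemma GG_zero : GG 0 = 1 := by
  rw [GG, psum_zero, cJ]
  norm_num

/-- the auxiliary right-shifted coefficients for `v·G''`. -/
def c3 : ℕ → ℝ := fun k => (k : ℝ) * ((k : ℝ) + 1) * cJ (k + 1)

lemma adm_c3 : Adm c3 := by
  refine ⟨1, 4, zero_le_one, by norm_num, fun k => ?_⟩
  have h1 : (0:ℝ) < k.factorial := by positivity
  have h2 : (0:ℝ) < (k+1).factorial := by positivity
  have h3 : (0:ℝ) < (k+2).factorial := by positivity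
  have hf1 : ((k+1).factorial : ℝ) = ((k:ℝ)+1) * k.factorial := by
    rw [Nat.factorial_succ]; push_cast; ring
  have hk2 : (k:ℝ) ≤ 2 ^ k := nat_le_two_pow k
  have habs : |c3 k| = (k:ℝ) * ((k:ℝ)+1) / (((k+1).factorial : ℝ) * ((k+2).factorial : ℝ)) := by
    rw [c3, cJ, abs_mul, abs_mul, abs_div, abs_pow, abs_neg, abs_one, one_pow,
      abs_of_nonneg (Nat.cast_nonneg k), abs_of_nonneg (by positivity : (0:ℝ) ≤ (k:ℝ)+1),
      abs_of_nonneg (by positivity : (0:ℝ) ≤ ((k+1).factorial : ℝ) * ((k+2).factorial : ℝ))]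
    ring
  rw [habs, div_le_div_iff₀ (by positivity) h1]
  have hge : (1:ℝ) ≤ ((k+2).factorial : ℝ) := by
    exact_mod_cast Nat.one_le_iff_ne_zero.mpr (Nat.factorial_ne_zero _)
  have hk4 : (k:ℝ) ≤ 4^k := by
    calc (k:ℝ) ≤ 2^k := nat_le_two_pow k
      _ ≤ 4^k := by
        apply pow_le_pow_left₀ (by norm_num) (by norm_num)
  have e2 : (k:ℝ) * ((k:ℝ)+1) * (k.factorial : ℝ) = (k:ℝ) * ((k+1).factorial : ℝ) := by
    rw [hf1]; ring
  rw [e2]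
  calc (k:ℝ) * ((k+1).factorial : ℝ) ≤ 4^k * ((k+1).factorial : ℝ) :=
        mul_le_mul_of_nonneg_right hk4 h2.le
    _ ≤ 4^k * ((k+1).factorial : ℝ) * ((k+2).factorial : ℝ) :=
        le_mul_of_one_le_right (by positivity) hge
    _ = 1 * 4 ^ k * (((k+1).factorial : ℝ) * ((k+2).factorial : ℝ)) := by ring

lemma cJ_rec (k : ℕ) : ((k:ℝ)+1) * ((k:ℝ)+2) * cJ (k+1) = -cJ k := by
  have hf1 : ((k+1).factorial : ℝ) = ((k:ℝ)+1) * k.factorial := by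
    rw [Nat.factorial_succ]; push_cast; ring
  have hf2 : ((k+2).factorial : ℝ) = ((k:ℝ)+2) * (k+1).factorial := by
    rw [show k+2 = (k+1)+1 from rfl, Nat.factorial_succ]; push_cast; ring
  have h1 : ((k.factorial : ℝ)) ≠ 0 := by positivity
  have h2 : (((k+1).factorial : ℝ)) ≠ 0 := by positivity
  rw [cJ, cJ, show k+1+1 = k+2 from rfl, hf2, hf1, pow_succ]
  field_simp

lemma GG_ode (v : ℝ) : v * GG2 v + 2 * GG1 v + GG v = 0 := by
  have hA := adm_summable adm_c3 v
  have hB := adm_summable (adm_shift adm_cJ) v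
  have hC := adm_summable adm_cJ v
  have h2B : Summable (fun k => 2 * (psShift cJ k * v ^ k)) := hB.mul_left 2
  have hmul : v * GG2 v = psum c3 v := by
    rw [GG2, psum, ← tsum_mul_left, psum, hA.tsum_eq_zero_add]
    have h0 : c3 0 * v ^ 0 = 0 := by simp [c3]
    rw [h0, zero_add]
    exact tsum_congr fun k => by simp only [c3, psShift]; push_cast; ring
  rw [hmul, GG1, GG]
  calc psum c3 v + 2 * psum (psShift cJ) v + psum cJ v
      = ∑' k, (c3 k * v ^ k + (2 * (psShift cJ k * v ^ k) + cJ k * v ^ k)) := by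
        rw [psum, psum, psum, ← tsum_mul_left, add_assoc, ← h2B.tsum_add hC,
          ← hA.tsum_add (h2B.add hC)]
    _ = ∑' (_ : ℕ), (0:ℝ) := by
        refine tsum_congr fun k => ?_
        have h := cJ_rec k
        simp only [c3, psShift]
        push_cast
        linear_combination v ^ k * h
    _ = 0 := tsum_zero

lemma besselJ1_eq (z : ℝ) : besselJ1 z = (z/2) * GG (z^2/4) := by
  rw [besselJ1, GG, psum, ← tsum_mul_left]
  refine tsum_congr fun m => ?_
  rw [show 2*m+1 = 2*m+1 from rfl, pow_succ, pow_mul]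
  have h : ((z/2)^2) = z^2/4 := by ring
  rw [h, cJ]
  ring

lemma integrand_eq {κ : ℝ} {x τ : ℝ} (hx : 0 ≤ x) (hτ : x < τ) (c : ℝ) :
    c * besselJ1 (κ * Real.sqrt (τ^2 - x^2)) / Real.sqrt (τ^2 - x^2)
      = κ/2 * (c * GG (κ^2/4 * (τ^2 - x^2))) := by
  have hu : 0 < τ^2 - x^2 := by nlinarith
  have hs : 0 < Real.sqrt (τ^2-x^2) := Real.sqrt_pos.mpr hu
  rw [besselJ1_eq]
  have hsq : (κ * Real.sqrt (τ^2-x^2))^2 / 4 = κ^2/4*(τ^2-x^2) := by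
    rw [mul_pow, Real.sq_sqrt hu.le]; ring
  rw [hsq]
  field_simp



/-- Leibniz rule: derivative of `y ↦ ∫_a^y h(τ,y) dτ` when the parameter also moves. -/
lemma hasDerivAt_param_integral
    {h h' : ℝ → ℝ → ℝ}
    (hh : Continuous fun p : ℝ × ℝ => h p.1 p.2)
    (hh' : Continuous fun p : ℝ × ℝ => h' p.1 p.2)
    (hd : ∀ τ y, HasDerivAt (fun z => h τ z) (h' τ y) y)
    (a y₀ : ℝ) :
    HasDerivAt (fun y => ∫ τ in a..y, h τ y)
      (h y₀ y₀ + ∫ τ in a..y₀, h' τ y₀) y₀ := by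
  have hcτ : ∀ y : ℝ, Continuous fun τ => h τ y := fun y =>
    hh.comp (continuous_id.prodMk continuous_const)
  have hcτ' : ∀ y : ℝ, Continuous fun τ => h' τ y := fun y =>
    hh'.comp (continuous_id.prodMk continuous_const)
  have hint : ∀ (y c d : ℝ), IntervalIntegrable (fun τ => h τ y) volume c d := fun y c d =>
    (hcτ y).intervalIntegrable c d
  have key : ∀ y : ℝ, (∫ τ in a..y, h τ y)
      = (∫ τ in a..y₀, h τ y) + ∫ τ in y₀..y, h τ y := fun y =>
    (integral_add_adjacent_intervals (hint y a y₀) (hint y y₀ y)).symm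
  have H1 : HasDerivAt (fun y => ∫ τ in a..y₀, h τ y) (∫ τ in a..y₀, h' τ y₀) y₀ := by
    set K : Set (ℝ × ℝ) := uIcc a y₀ ×ˢ Metric.closedBall y₀ 1 with hK
    have hKc : IsCompact K := isCompact_uIcc.prod (isCompact_closedBall _ _)
    obtain ⟨C, hC⟩ := hKc.exists_bound_of_continuousOn hh'.continuousOn
    refine (intervalIntegral.hasDerivAt_integral_of_dominated_loc_of_deriv_le
      (F := fun y τ => h τ y) (F' := fun y τ => h' τ y) (bound := fun _ => C)
      (Metric.ball_mem_nhds y₀ one_pos) ?_ ((hint y₀ a y₀)) ?_ ?_ intervalIntegrable_const ?_).2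
    · exact Filter.Eventually.of_forall fun y => ((hcτ y).aestronglyMeasurable).restrict
    · exact ((hcτ' y₀).aestronglyMeasurable).restrict
    · refine Filter.Eventually.of_forall fun τ hτ y hy => ?_
      exact hC (τ, y) ⟨uIoc_subset_uIcc hτ, Metric.ball_subset_closedBall hy⟩
    · exact Filter.Eventually.of_forall fun τ _ y _ => hd τ y
  have H2 : HasDerivAt (fun y => ∫ τ in y₀..y, h τ y) (h y₀ y₀) y₀ := by
    rw [hasDerivAt_iff_isLittleO]
    rw [Asymptotics.isLittleO_iff]
    intro c hc
    obtain ⟨δ, hδpos, hδ⟩ := Metric.continuousAt_iff.mp hh.continuousAt c hc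
    rw [Metric.eventually_nhds_iff]
    refine ⟨δ, hδpos, fun y hy => ?_⟩
    have hsub : (∫ τ in y₀..y, h τ y) - (∫ τ in y₀..y₀, h τ y₀) - (y - y₀) • h y₀ y₀
        = ∫ τ in y₀..y, (h τ y - h y₀ y₀) := by
      rw [intervalIntegral.integral_same, sub_zero, intervalIntegral.integral_sub (hint y y₀ y)
        (intervalIntegrable_const), intervalIntegral.integral_const]
    rw [hsub]
    have hbd : ∀ τ ∈ Set.uIoc y₀ y, ‖h τ y - h y₀ y₀‖ ≤ c := by
      intro τ hτ
      have habs : |τ - y₀| ≤ |y - y₀| := by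
        rcases Set.mem_uIoc.mp hτ with ⟨h1, h2⟩ | ⟨h1, h2⟩ <;>
          refine abs_le.mpr ⟨?_, ?_⟩ <;>
          cases abs_cases (y - y₀) with
          | inl hcase => linarith [hcase.1]
          | inr hcase => linarith [hcase.1]
      have hdist : dist ((τ, y) : ℝ × ℝ) (y₀, y₀) < δ := by
        rw [Prod.dist_eq]
        rw [Real.dist_eq, Real.dist_eq] at *
        exact max_lt (lt_of_le_of_lt habs hy) hy
      have hlt := hδ hdist
      simp only [Real.dist_eq] at hlt
      rw [Real.norm_eq_abs]
      exact le_of_lt hlt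
    calc ‖∫ τ in y₀..y, (h τ y - h y₀ y₀)‖ ≤ c * |y - y₀| :=
          intervalIntegral.norm_integral_le_of_norm_le_const hbd
      _ = c * ‖y - y₀‖ := by rw [Real.norm_eq_abs]
  have hfin : HasDerivAt (fun y => (∫ τ in a..y₀, h τ y) + ∫ τ in y₀..y, h τ y) _ y₀ :=
    H1.add H2
  simp only [← key] at hfin
  rw [add_comm] at hfin
  exact hfin

/-! auxiliary solution pieces -/

def Vf (e₀ : ℝ → ℝ) (κ t : ℝ) : ℝ → ℝ :=
  fun y => ∫ τ in y..t, e₀ (t - τ) * GG (κ^2/4 * (τ^2 - y^2))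
def Pf (e₀ : ℝ → ℝ) (κ t : ℝ) : ℝ → ℝ :=
  fun y => ∫ τ in y..t, e₀ (t - τ) * GG1 (κ^2/4 * (τ^2 - y^2))
def Qf (e₀ : ℝ → ℝ) (κ t : ℝ) : ℝ → ℝ :=
  fun y => ∫ τ in y..t, e₀ (t - τ) * GG2 (κ^2/4 * (τ^2 - y^2))
def EE (e₀ : ℝ → ℝ) (κ t x : ℝ) : ℝ := e₀ (t - x) - κ^2 * x / 2 * Vf e₀ κ t x
def Wtf (e₀ : ℝ → ℝ) (κ x : ℝ) : ℝ → ℝ :=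
  fun s => ∫ τ in x..s, deriv e₀ (s - τ) * GG (κ^2/4 * (τ^2 - x^2))

/-! basic facts about `e₀` -/

lemma zero_boundary {f : ℝ → ℝ} (hf : Continuous f) (h0 : ∀ t < (0:ℝ), f t = 0) :
    f 0 = 0 := by
  have h1 : Filter.Tendsto f (nhdsWithin (0:ℝ) (Iio 0)) (nhds (f 0)) :=
    (hf.continuousAt).continuousWithinAt
  have h2 : Filter.Tendsto f (nhdsWithin (0:ℝ) (Iio 0)) (nhds 0) := by
    apply Filter.Tendsto.congr' _ tendsto_const_nhds
    filter_upwards [self_mem_nhdsWithin] with u hu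
    exact (h0 u hu).symm
  exact tendsto_nhds_unique h1 h2

lemma aux_C2 {f : ℝ → ℝ} (hf : ContDiff ℝ 2 f) :
    Differentiable ℝ f ∧ Differentiable ℝ (deriv f) ∧ Continuous (deriv (deriv f)) := by
  rw [show (2 : WithTop ℕ∞) = 1 + 1 by norm_num] at hf
  obtain ⟨hd, -, h1⟩ := contDiff_succ_iff_deriv.mp hf
  obtain ⟨hd1, hc1⟩ := contDiff_one_iff_deriv.mp h1
  exact ⟨hd, hd1, hc1⟩

/-! chain rules for shifted composition -/

lemma hasDerivAt_shift {f : ℝ → ℝ} (hf : Differentiable ℝ f) (τ s : ℝ) :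
    HasDerivAt (fun z => f (z - τ)) (deriv f (s - τ)) s := by
  simpa [Function.comp_def] using ((hf (s - τ)).hasDerivAt).comp s ((hasDerivAt_id s).sub_const τ)

lemma hasDerivAt_shift' {f : ℝ → ℝ} (hf : Differentiable ℝ f) (t y : ℝ) :
    HasDerivAt (fun z => f (t - z)) (-deriv f (t - y)) y := by
  simpa [Function.comp_def] using ((hf (t - y)).hasDerivAt).comp y ((hasDerivAt_id y).const_sub t)

lemma hasDerivAt_comp_left {F F' : ℝ → ℝ} (hF : ∀ v, HasDerivAt F (F' v) v)
    (κ x τ : ℝ) :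
    HasDerivAt (fun z => F (κ^2/4 * (z^2 - x^2)))
      (F' (κ^2/4 * (τ^2 - x^2)) * (κ^2/4 * (2*τ))) τ := by
  have hin : HasDerivAt (fun z : ℝ => κ^2/4 * (z^2 - x^2)) (κ^2/4 * (2*τ)) τ := by
    have h := ((hasDerivAt_pow 2 τ).sub_const (x^2)).const_mul (κ^2/4)
    norm_num at h
    convert h using 1 <;> ring
  exact (hF _).comp τ hin

lemma hasDerivAt_comp_right {F F' : ℝ → ℝ} (hF : ∀ v, HasDerivAt F (F' v) v)
    (κ τ y : ℝ) :
    HasDerivAt (fun z => F (κ^2/4 * (τ^2 - z^2)))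
      (F' (κ^2/4 * (τ^2 - y^2)) * (κ^2/4 * (-(2*y)))) y := by
  have hin : HasDerivAt (fun z : ℝ => κ^2/4 * (τ^2 - z^2)) (κ^2/4 * (-(2*y))) y := by
    have h := ((hasDerivAt_pow 2 y).const_sub (τ^2)).const_mul (κ^2/4)
    norm_num at h
    exact h.congr_deriv (by ring)
  exact (hF _).comp y hin

/-! identification of `refSol` with the smooth version `EE` -/

lemma refSol_eq_EE {e₀ : ℝ → ℝ} {κ : ℝ} {y s : ℝ} (hy : 0 ≤ y) (hys : y ≤ s) :
    refSol e₀ κ s y = EE e₀ κ s y := by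
  rw [refSol, if_pos hys, EE, Vf]
  have hint : (∫ τ in y..s, e₀ (s - τ) * besselJ1 (κ * Real.sqrt (τ^2 - y^2))
        / Real.sqrt (τ^2 - y^2))
      = ∫ τ in y..s, κ/2 * (e₀ (s - τ) * GG (κ^2/4 * (τ^2 - y^2))) := by
    rw [intervalIntegral.integral_of_le hys, intervalIntegral.integral_of_le hys]
    refine MeasureTheory.setIntegral_congr_fun measurableSet_Ioc fun τ hτ => ?_
    exact integrand_eq hy hτ.1 _
  rw [hint, intervalIntegral.integral_const_mul]
  ring

/-! t-direction derivatives -/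

section TDir

variable {e₀ : ℝ → ℝ} {κ : ℝ}

lemma cont_joint_t {f : ℝ → ℝ} (hf : Continuous f) {F : ℝ → ℝ} (hF : Continuous F) (x : ℝ) :
    Continuous fun p : ℝ × ℝ => f (p.2 - p.1) * F (κ^2/4 * (p.1^2 - x^2)) := by
  apply Continuous.mul
  · exact hf.comp (continuous_snd.sub continuous_fst)
  · exact hF.comp (by fun_prop)

lemma cont_joint_x {f : ℝ → ℝ} (hf : Continuous f) {F : ℝ → ℝ} (hF : Continuous F) (t : ℝ) :
    Continuous fun p : ℝ × ℝ => f (t - p.1) * F (κ^2/4 * (p.1^2 - p.2^2)) := by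
  apply Continuous.mul
  · exact hf.comp (continuous_const.sub continuous_fst)
  · exact hF.comp (by fun_prop)

lemma hasDerivAt_EE_t (hcont : Continuous e₀) (hdiff : Differentiable ℝ e₀)
    (hcont' : Continuous (deriv e₀)) (he0 : e₀ 0 = 0) (x s₀ : ℝ) :
    HasDerivAt (fun s => EE e₀ κ s x)
      (deriv e₀ (s₀ - x) - κ^2 * x / 2 * Wtf e₀ κ x s₀) s₀ := by
  have hd : ∀ τ s : ℝ, HasDerivAt (fun z => e₀ (z - τ) * GG (κ^2/4 * (τ^2 - x^2)))
      (deriv e₀ (s - τ) * GG (κ^2/4 * (τ^2 - x^2))) s := fun τ s =>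
    (hasDerivAt_shift hdiff τ s).mul_const _
  have hdW := hasDerivAt_param_integral (cont_joint_t hcont continuous_GG x)
    (cont_joint_t hcont' continuous_GG x) hd x s₀
  have H := (hasDerivAt_shift hdiff x s₀).sub (hdW.const_mul (κ^2 * x / 2))
  simp only [sub_self, he0, zero_mul, zero_add] at H
  exact H

lemma hasDerivAt_Wtf (hcont' : Continuous (deriv e₀)) (hdiff' : Differentiable ℝ (deriv e₀))
    (hcont'' : Continuous (deriv (deriv e₀))) (he0' : deriv e₀ 0 = 0) (x s₀ : ℝ) :
    HasDerivAt (Wtf e₀ κ x)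
      (∫ τ in x..s₀, deriv (deriv e₀) (s₀ - τ) * GG (κ^2/4 * (τ^2 - x^2))) s₀ := by
  have hd : ∀ τ s : ℝ, HasDerivAt (fun z => deriv e₀ (z - τ) * GG (κ^2/4 * (τ^2 - x^2)))
      (deriv (deriv e₀) (s - τ) * GG (κ^2/4 * (τ^2 - x^2))) s := fun τ s =>
    (hasDerivAt_shift hdiff' τ s).mul_const _
  have hdW := hasDerivAt_param_integral (cont_joint_t hcont' continuous_GG x)
    (cont_joint_t hcont'' continuous_GG x) hd x s₀
  simp only [sub_self, he0', zero_mul, zero_add] at hdW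
  exact hdW

/-! x-direction generic derivative -/

lemma hasDerivAt_int_x (hcont : Continuous e₀)
    {F F' : ℝ → ℝ} (hF : ∀ v, HasDerivAt F (F' v) v)
    (hFc : Continuous F) (hF'c : Continuous F') (t y₀ : ℝ) :
    HasDerivAt (fun y => ∫ τ in y..t, e₀ (t - τ) * F (κ^2/4 * (τ^2 - y^2)))
      (-(e₀ (t - y₀) * F 0)
        - κ^2/2 * y₀ * ∫ τ in y₀..t, e₀ (t - τ) * F' (κ^2/4 * (τ^2 - y₀^2))) y₀ := by
  have hrw : (fun y => ∫ τ in y..t, e₀ (t - τ) * F (κ^2/4 * (τ^2 - y^2)))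
      = fun y => -∫ τ in t..y, e₀ (t - τ) * F (κ^2/4 * (τ^2 - y^2)) := by
    funext y
    rw [intervalIntegral.integral_symm]
  have hc' : Continuous fun p : ℝ × ℝ =>
      e₀ (t - p.1) * (F' (κ^2/4 * (p.1^2 - p.2^2)) * (κ^2/4 * (-(2*p.2)))) := by
    apply Continuous.mul
    · exact hcont.comp (continuous_const.sub continuous_fst)
    · apply Continuous.mul
      · exact hF'c.comp (by fun_prop)
      · fun_prop
  have hd : ∀ τ y : ℝ, HasDerivAt (fun z => e₀ (t - τ) * F (κ^2/4 * (τ^2 - z^2)))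
      (e₀ (t - τ) * (F' (κ^2/4 * (τ^2 - y^2)) * (κ^2/4 * (-(2*y))))) y := fun τ y =>
    (hasDerivAt_comp_right hF κ τ y).const_mul _
  have h := (hasDerivAt_param_integral (cont_joint_x hcont hFc t) hc' hd t y₀).neg
  rw [hrw]
  refine h.congr_deriv ?_
  have h1 : (∫ τ in t..y₀, e₀ (t - τ) * (F' (κ^2/4 * (τ^2 - y₀^2)) * (κ^2/4 * (-(2*y₀)))))
      = (κ^2/4 * (-(2*y₀))) * ∫ τ in t..y₀, e₀ (t - τ) * F' (κ^2/4 * (τ^2 - y₀^2)) := by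
    rw [← intervalIntegral.integral_const_mul]
    exact intervalIntegral.integral_congr fun τ _ => by ring
  rw [h1, intervalIntegral.integral_symm y₀ t]
  have h2 : κ^2/4 * (y₀^2 - y₀^2) = 0 := by ring
  rw [h2]
  ring

end TDir

section IBP

variable {e₀ : ℝ → ℝ} {κ : ℝ}

lemma Wtt_eq (hcont : Continuous e₀) (hdiff : Differentiable ℝ e₀)
    (hcont' : Continuous (deriv e₀)) (hdiff' : Differentiable ℝ (deriv e₀))
    (hcont'' : Continuous (deriv (deriv e₀)))
    (he0 : e₀ 0 = 0) (he0' : deriv e₀ 0 = 0) (x t : ℝ) :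
    (∫ τ in x..t, deriv (deriv e₀) (t - τ) * GG (κ^2/4 * (τ^2 - x^2)))
      = deriv e₀ (t - x) + GG1 0 * (κ^2/4*(2*x)) * e₀ (t - x)
        + (-(3*κ^2/2) * Pf e₀ κ t x + (-(κ^2) * Vf e₀ κ t x + κ^4*x^2/4 * Qf e₀ κ t x)) := by
  have ce : Continuous fun τ => e₀ (t - τ) := hcont.comp (continuous_const.sub continuous_id)
  have ce' : Continuous fun τ => deriv e₀ (t - τ) :=
    hcont'.comp (continuous_const.sub continuous_id)
  have ce'' : Continuous fun τ => deriv (deriv e₀) (t - τ) :=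
    hcont''.comp (continuous_const.sub continuous_id)
  have cG : Continuous fun τ : ℝ => GG (κ^2/4 * (τ^2 - x^2)) :=
    continuous_GG.comp (by fun_prop)
  have cG1 : Continuous fun τ : ℝ => GG1 (κ^2/4 * (τ^2 - x^2)) :=
    continuous_GG1.comp (by fun_prop)
  have cG2 : Continuous fun τ : ℝ => GG2 (κ^2/4 * (τ^2 - x^2)) :=
    continuous_GG2.comp (by fun_prop)
  have cu2 : Continuous fun τ : ℝ => GG1 (κ^2/4 * (τ^2 - x^2)) * (κ^2/4*(2*τ)) :=
    cG1.mul (by fun_prop)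
  have cu2' : Continuous fun τ : ℝ =>
      (GG2 (κ^2/4 * (τ^2 - x^2)) * (κ^2/4*(2*τ))) * (κ^2/4*(2*τ))
        + GG1 (κ^2/4 * (τ^2 - x^2)) * (κ^2/4*2) :=
    ((cG2.mul (by fun_prop)).mul (by fun_prop)).add (cG1.mul continuous_const)
  -- first integration by parts
  have hu1 : ∀ τ ∈ uIcc x t, HasDerivAt (fun z => GG (κ^2/4 * (z^2 - x^2)))
      (GG1 (κ^2/4 * (τ^2 - x^2)) * (κ^2/4*(2*τ))) τ := fun τ _ =>
    hasDerivAt_comp_left hasDerivAt_GG κ x τ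
  have hv1 : ∀ τ ∈ uIcc x t, HasDerivAt (fun z => -(deriv e₀ (t - z)))
      (deriv (deriv e₀) (t - τ)) τ := fun τ _ => by
    exact (hasDerivAt_shift' hdiff' t τ).neg.congr_deriv (neg_neg _)
  have hIBP1 := intervalIntegral.integral_mul_deriv_eq_deriv_mul hu1 hv1
    (cu2.intervalIntegrable x t) (ce''.intervalIntegrable x t)
  have e1 : (∫ τ in x..t, GG (κ^2/4 * (τ^2 - x^2)) * deriv (deriv e₀) (t - τ))
      = deriv e₀ (t - x)
        - ∫ τ in x..t, (GG1 (κ^2/4 * (τ^2 - x^2)) * (κ^2/4*(2*τ))) * (-(deriv e₀ (t - τ))) := by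
    rw [hIBP1, show κ^2/4 * (x^2 - x^2) = (0:ℝ) by ring, show t - t = (0:ℝ) by ring,
      GG_zero, he0']
    ring
  have e2 : (∫ τ in x..t, (GG1 (κ^2/4 * (τ^2 - x^2)) * (κ^2/4*(2*τ))) * (-(deriv e₀ (t - τ))))
      = -∫ τ in x..t, (GG1 (κ^2/4 * (τ^2 - x^2)) * (κ^2/4*(2*τ))) * deriv e₀ (t - τ) := by
    rw [← intervalIntegral.integral_neg]
    exact intervalIntegral.integral_congr fun τ _ => by ring
  -- second integration by parts
  have hu2 : ∀ τ ∈ uIcc x t, HasDerivAt (fun z => GG1 (κ^2/4 * (z^2 - x^2)) * (κ^2/4*(2*z)))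
      ((GG2 (κ^2/4 * (τ^2 - x^2)) * (κ^2/4*(2*τ))) * (κ^2/4*(2*τ))
        + GG1 (κ^2/4 * (τ^2 - x^2)) * (κ^2/4*2)) τ := fun τ _ => by
    have h1 := hasDerivAt_comp_left hasDerivAt_GG1 κ x τ
    have h2 : HasDerivAt (fun z : ℝ => κ^2/4*(2*z)) (κ^2/4*2) τ := by
      simpa using ((hasDerivAt_id τ).const_mul (2:ℝ)).const_mul (κ^2/4)
    have h3 := h1.mul h2
    exact h3.congr_deriv (by ring)
  have hv2 : ∀ τ ∈ uIcc x t, HasDerivAt (fun z => -(e₀ (t - z))) (deriv e₀ (t - τ)) τ :=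
    fun τ _ => (hasDerivAt_shift' hdiff t τ).neg.congr_deriv (neg_neg _)
  have hIBP2 := intervalIntegral.integral_mul_deriv_eq_deriv_mul hu2 hv2
    (cu2'.intervalIntegrable x t) (ce'.intervalIntegrable x t)
  have e3 : (∫ τ in x..t, (GG1 (κ^2/4 * (τ^2 - x^2)) * (κ^2/4*(2*τ))) * deriv e₀ (t - τ))
      = GG1 0 * (κ^2/4*(2*x)) * e₀ (t - x)
        - ∫ τ in x..t, ((GG2 (κ^2/4 * (τ^2 - x^2)) * (κ^2/4*(2*τ))) * (κ^2/4*(2*τ))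
            + GG1 (κ^2/4 * (τ^2 - x^2)) * (κ^2/4*2)) * (-(e₀ (t - τ))) := by
    rw [hIBP2, show κ^2/4 * (x^2 - x^2) = (0:ℝ) by ring, show t - t = (0:ℝ) by ring, he0]
    ring
  have e4 : (∫ τ in x..t, ((GG2 (κ^2/4 * (τ^2 - x^2)) * (κ^2/4*(2*τ))) * (κ^2/4*(2*τ))
            + GG1 (κ^2/4 * (τ^2 - x^2)) * (κ^2/4*2)) * (-(e₀ (t - τ))))
      = -∫ τ in x..t, ((GG2 (κ^2/4 * (τ^2 - x^2)) * (κ^2/4*(2*τ))) * (κ^2/4*(2*τ))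
            + GG1 (κ^2/4 * (τ^2 - x^2)) * (κ^2/4*2)) * e₀ (t - τ) := by
    rw [← intervalIntegral.integral_neg]
    exact intervalIntegral.integral_congr fun τ _ => by ring
  -- the Bessel-type ODE collapses the remaining integrand
  have hkey : ∀ τ : ℝ, ((GG2 (κ^2/4 * (τ^2 - x^2)) * (κ^2/4*(2*τ))) * (κ^2/4*(2*τ))
        + GG1 (κ^2/4 * (τ^2 - x^2)) * (κ^2/4*2)) * e₀ (t - τ)
      = -(3*κ^2/2) * (e₀ (t - τ) * GG1 (κ^2/4 * (τ^2 - x^2)))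
        + (-(κ^2) * (e₀ (t - τ) * GG (κ^2/4 * (τ^2 - x^2)))
          + κ^4*x^2/4 * (e₀ (t - τ) * GG2 (κ^2/4 * (τ^2 - x^2)))) := fun τ => by
    linear_combination (κ^2 * e₀ (t - τ)) * GG_ode (κ^2/4 * (τ^2 - x^2))
  have hsplit : (∫ τ in x..t, ((GG2 (κ^2/4 * (τ^2 - x^2)) * (κ^2/4*(2*τ))) * (κ^2/4*(2*τ))
        + GG1 (κ^2/4 * (τ^2 - x^2)) * (κ^2/4*2)) * e₀ (t - τ))
      = -(3*κ^2/2) * Pf e₀ κ t x + (-(κ^2) * Vf e₀ κ t x + κ^4*x^2/4 * Qf e₀ κ t x) := by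
    rw [intervalIntegral.integral_congr (fun τ _ => hkey τ)]
    have i1 : IntervalIntegrable (fun τ => -(3*κ^2/2) * (e₀ (t - τ) * GG1 (κ^2/4 * (τ^2 - x^2))))
        volume x t := (continuous_const.mul (ce.mul cG1)).intervalIntegrable x t
    have i2 : IntervalIntegrable (fun τ => -(κ^2) * (e₀ (t - τ) * GG (κ^2/4 * (τ^2 - x^2))))
        volume x t := (continuous_const.mul (ce.mul cG)).intervalIntegrable x t
    have i3 : IntervalIntegrable (fun τ => κ^4*x^2/4 * (e₀ (t - τ) * GG2 (κ^2/4 * (τ^2 - x^2))))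
        volume x t := (continuous_const.mul (ce.mul cG2)).intervalIntegrable x t
    rw [intervalIntegral.integral_add i1 (i2.add i3),
      intervalIntegral.integral_add i2 i3,
      intervalIntegral.integral_const_mul, intervalIntegral.integral_const_mul,
      intervalIntegral.integral_const_mul]
    rfl
  calc (∫ τ in x..t, deriv (deriv e₀) (t - τ) * GG (κ^2/4 * (τ^2 - x^2)))
      = ∫ τ in x..t, GG (κ^2/4 * (τ^2 - x^2)) * deriv (deriv e₀) (t - τ) :=
        intervalIntegral.integral_congr fun τ _ => mul_comm _ _
    _ = _ := by rw [e1, e2, e3, e4, hsplit]; ring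

end IBP

end

/-- The reference solution satisfies the dispersive wave (Klein--Gordon)
equation `∂ₜ²e = ∂ₓ²e − κ²e` for `t > x > 0`, together with the boundary
condition `e(t,0) = e₀(t)`. -/
theorem refSol_solves_dispersive_wave
    (e₀ : ℝ → ℝ) (hcont : Continuous e₀) (hC2 : ContDiff ℝ 2 e₀)
    (hzero : ∀ t < (0 : ℝ), e₀ t = 0)
    (κ : ℝ) (hκ : 0 < κ) :
    (∀ x : ℝ, 0 < x → ∀ t : ℝ, x < t →
      deriv (deriv (fun s => refSol e₀ κ s x)) t
        = deriv (deriv (fun y => refSol e₀ κ t y)) x - κ ^ 2 * refSol e₀ κ t x) ∧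
    (∀ t : ℝ, refSol e₀ κ t 0 = e₀ t) := by
  obtain ⟨hdiff, hdiff', hcont''⟩ := aux_C2 hC2
  have hcont' : Continuous (deriv e₀) := hdiff'.continuous
  have he0 : e₀ 0 = 0 := zero_boundary hcont hzero
  have hzero' : ∀ u < (0:ℝ), deriv e₀ u = 0 := by
    intro u hu
    have hev : e₀ =ᶠ[nhds u] (fun _ => (0:ℝ)) :=
      Filter.eventuallyEq_of_mem (Iio_mem_nhds hu) (fun v hv => hzero v hv)
    rw [hev.deriv_eq]
    exact deriv_const u 0
  have he0' : deriv e₀ 0 = 0 := zero_boundary hcont' hzero'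
  constructor
  · intro x hx t hxt
    -- identification with the smooth version in the t-direction
    have hevt : ∀ s₀ ∈ Ioi x, (fun s => refSol e₀ κ s x) =ᶠ[nhds s₀]
        (fun s => EE e₀ κ s x) := by
      intro s₀ hs₀
      filter_upwards [isOpen_Ioi.mem_nhds hs₀] with s hs
      exact refSol_eq_EE hx.le (le_of_lt hs)
    have hddt : deriv (deriv fun s => refSol e₀ κ s x) t
        = deriv (deriv fun s => EE e₀ κ s x) t := by
      apply Filter.EventuallyEq.deriv_eq
      filter_upwards [isOpen_Ioi.mem_nhds hxt] with s hs
      exact ((hevt s hs).deriv_eq : _)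
    -- identification in the x-direction
    have hevx : ∀ y₀ ∈ Ioo (0:ℝ) t, (fun y => refSol e₀ κ t y) =ᶠ[nhds y₀]
        (fun y => EE e₀ κ t y) := by
      intro y₀ hy₀
      filter_upwards [isOpen_Ioo.mem_nhds hy₀] with y hy
      exact refSol_eq_EE hy.1.le hy.2.le
    have hddx : deriv (deriv fun y => refSol e₀ κ t y) x
        = deriv (deriv fun y => EE e₀ κ t y) x := by
      apply Filter.EventuallyEq.deriv_eq
      filter_upwards [isOpen_Ioo.mem_nhds (⟨hx, hxt⟩ : x ∈ Ioo 0 t)] with y hy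
      exact ((hevx y hy).deriv_eq : _)
    have hrefEE : refSol e₀ κ t x = EE e₀ κ t x := refSol_eq_EE hx.le hxt.le
    -- t-direction second derivative of EE
    have hT1fun : deriv (fun s => EE e₀ κ s x)
        = fun s => deriv e₀ (s - x) - κ^2 * x / 2 * Wtf e₀ κ x s :=
      funext fun s => (hasDerivAt_EE_t hcont hdiff hcont' he0 x s).deriv
    have hT2 : HasDerivAt (fun s => deriv e₀ (s - x) - κ^2 * x / 2 * Wtf e₀ κ x s)
        (deriv (deriv e₀) (t - x) - κ^2 * x / 2
          * ∫ τ in x..t, deriv (deriv e₀) (t - τ) * GG (κ^2/4 * (τ^2 - x^2))) t :=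
      (hasDerivAt_shift hdiff' x t).sub
        ((hasDerivAt_Wtf hcont' hdiff' hcont'' he0' x t).const_mul _)
    have hL : deriv (deriv fun s => EE e₀ κ s x) t
        = deriv (deriv e₀) (t - x) - κ^2 * x / 2
            * ∫ τ in x..t, deriv (deriv e₀) (t - τ) * GG (κ^2/4 * (τ^2 - x^2)) := by
      rw [hT1fun]
      exact hT2.deriv
    -- x-direction derivatives of EE
    have hV : ∀ y₀ : ℝ, HasDerivAt (Vf e₀ κ t)
        (-(e₀ (t - y₀) * GG 0) - κ^2/2 * y₀ * Pf e₀ κ t y₀) y₀ := fun y₀ =>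
      hasDerivAt_int_x hcont hasDerivAt_GG continuous_GG continuous_GG1 t y₀
    have hP : ∀ y₀ : ℝ, HasDerivAt (Pf e₀ κ t)
        (-(e₀ (t - y₀) * GG1 0) - κ^2/2 * y₀ * Qf e₀ κ t y₀) y₀ := fun y₀ =>
      hasDerivAt_int_x hcont hasDerivAt_GG1 continuous_GG1 continuous_GG2 t y₀
    have hcy : ∀ y₀ : ℝ, HasDerivAt (fun y : ℝ => κ^2 * y / 2) (κ^2 * 1 / 2) y₀ :=
      fun y₀ => ((hasDerivAt_id y₀).const_mul (κ^2)).div_const 2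
    have hX1 : ∀ y₀ : ℝ, HasDerivAt (fun y => EE e₀ κ t y)
        (-(deriv e₀ (t - y₀)) - (κ^2 * 1 / 2 * Vf e₀ κ t y₀
          + κ^2 * y₀ / 2 * (-(e₀ (t - y₀) * GG 0) - κ^2/2 * y₀ * Pf e₀ κ t y₀))) y₀ :=
      fun y₀ => (hasDerivAt_shift' hdiff t y₀).sub ((hcy y₀).mul (hV y₀))
    have hX1fun : deriv (fun y => EE e₀ κ t y) = fun y =>
        -(deriv e₀ (t - y)) - (κ^2 * 1 / 2 * Vf e₀ κ t y
          + κ^2 * y / 2 * (-(e₀ (t - y) * GG 0) - κ^2/2 * y * Pf e₀ κ t y)) :=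
      funext fun y => (hX1 y).deriv
    have hA : HasDerivAt (fun y => -(deriv e₀ (t - y)))
        (-(-(deriv (deriv e₀) (t - x)))) x := (hasDerivAt_shift' hdiff' t x).neg
    have hB : HasDerivAt (fun y => κ^2 * 1 / 2 * Vf e₀ κ t y)
        (κ^2 * 1 / 2 * (-(e₀ (t - x) * GG 0) - κ^2/2 * x * Pf e₀ κ t x)) x :=
      (hV x).const_mul _
    have hpc : ∀ y₀ : ℝ, HasDerivAt (fun y : ℝ => κ^2/2 * y) (κ^2/2 * 1) y₀ :=
      fun y₀ => (hasDerivAt_id y₀).const_mul (κ^2/2)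
    have hinner : HasDerivAt (fun y => -(e₀ (t - y) * GG 0) - κ^2/2 * y * Pf e₀ κ t y)
        (-(-(deriv e₀ (t - x)) * GG 0) - (κ^2/2 * 1 * Pf e₀ κ t x
          + κ^2/2 * x * (-(e₀ (t - x) * GG1 0) - κ^2/2 * x * Qf e₀ κ t x))) x :=
      (((hasDerivAt_shift' hdiff t x).mul_const (GG 0)).neg).sub ((hpc x).mul (hP x))
    have hX2 : HasDerivAt (fun y => -(deriv e₀ (t - y)) - (κ^2 * 1 / 2 * Vf e₀ κ t y
        + κ^2 * y / 2 * (-(e₀ (t - y) * GG 0) - κ^2/2 * y * Pf e₀ κ t y))) _ x :=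
      hA.sub (hB.add ((hcy x).mul hinner))
    rw [hddt, hddx, hrefEE, hL, hX1fun, hX2.deriv,
      Wtt_eq hcont hdiff hcont' hdiff' hcont'' he0 he0' x t,
      show EE e₀ κ t x = e₀ (t - x) - κ^2 * x / 2 * Vf e₀ κ t x from rfl]
    simp only [GG_zero]
    ring
  · intro t
    rw [refSol]
    split_ifs with h
    · simp
    · exact (hzero t (by linarith [not_le.mp h])).symm
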